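/- Let A be a finite nonempty set with |A| = n ≥ 1. Then min over q ∈ Δ_A of max over p ∈ Δ_A of ∑_{a} p(a)·(1/2)·∑_{a'}(𝟙{a' = a} − q(a'))² equals max over p ∈ Δ_A of min over q ∈ Δ_A of the same expression, and both equal (1/2)·(1 − 1/n); moreover the outer minimum on the left is attained at the uniform distribution q(a) = 1/n for all a, and the outer maximum on the right is attained at the uniform distribution p(a) = 1/n. (This is the unconstrained single-state instance of Theorem 5: the maximum Tsallis entropy distribution minimizes the worst-case Brier score.) -/

import Mathlib

open Finset

lemma sum_sq_ge_aux {A : Type*} [Fintype A] [Nonempty A] (q : A → ℝ)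
    (hq : ∑ a, q a = 1) : 1 / (Fintype.card A : ℝ) ≤ ∑ a, q a ^ 2 := by
  have hn : (0:ℝ) < (Fintype.card A : ℝ) := by
    exact_mod_cast Fintype.card_pos
  set c : ℝ := 1 / (Fintype.card A : ℝ) with hc
  have h0 : (0:ℝ) ≤ ∑ a, (q a - c) ^ 2 :=
    Finset.sum_nonneg (fun a _ => sq_nonneg _)
  have hexp : ∑ a, (q a - c) ^ 2
      = ∑ a, q a ^ 2 - 2 * c * (∑ a, q a) + (Fintype.card A : ℝ) * c ^ 2 := by
    have : ∀ a ∈ Finset.univ, (q a - c) ^ 2 = q a ^ 2 - 2 * c * q a + c ^ 2 := by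
      intro a _; ring
    rw [Finset.sum_congr rfl this]
    rw [Finset.sum_add_distrib, Finset.sum_sub_distrib, ← Finset.mul_sum,
      Finset.sum_const, Finset.card_univ, nsmul_eq_mul]
  rw [hexp, hq] at h0
  have hcc : (Fintype.card A : ℝ) * c ^ 2 = c := by
    field_simp [hc]
    rw [hc, mul_one_div_cancel hn.ne']
  rw [hcc] at h0
  linarith

/-- Unconstrained single-state instance of Theorem 5: the minimax value of the
expected Brier score over the probability simplex equals the maximin value,
both equal `(1/2)·(1 − 1/n)`, and both outer optima are attained at the uniform
distribution. -/
theorem stmt12 {A : Type*} [Fintype A] [Nonempty A] [DecidableEq A] :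
    let n : ℕ := Fintype.card A
    let Δ : Set (A → ℝ) := {r | (∀ a, 0 ≤ r a) ∧ ∑ a, r a = 1}
    let B : (A → ℝ) → (A → ℝ) → ℝ := fun p q =>
      ∑ a, p a * ((1 / 2) * ∑ a', ((if a' = a then (1 : ℝ) else 0) - q a') ^ 2)
    let u : A → ℝ := fun _ => 1 / (n : ℝ)
    let val : ℝ := (1 / 2) * (1 - 1 / (n : ℝ))
    sInf {x : ℝ | ∃ q ∈ Δ, x = sSup {y : ℝ | ∃ p ∈ Δ, y = B p q}} = val ∧
    sSup {x : ℝ | ∃ p ∈ Δ, x = sInf {y : ℝ | ∃ q ∈ Δ, y = B p q}} = val ∧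
    sSup {y : ℝ | ∃ p ∈ Δ, y = B p u} = val ∧
    sInf {y : ℝ | ∃ q ∈ Δ, y = B u q} = val := by
  intro n Δ B u val
  have hcard : 0 < Fintype.card A := Fintype.card_pos
  have hn : (0:ℝ) < (n : ℝ) := by exact_mod_cast hcard
  have hn' : (n : ℝ) ≠ 0 := ne_of_gt hn
  -- uniform is in the simplex
  have hu : u ∈ Δ := by
    constructor
    · intro a; positivity
    · simp [u, Finset.sum_const, Finset.card_univ, n]
  -- the key algebraic form of B
  have hBform : ∀ p q : A → ℝ,
      B p q = (∑ a, p a) * ((1/2) * (1 + ∑ a', q a' ^ 2)) - ∑ a, p a * q a := by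
    intro p q
    have inner : ∀ a : A, ∑ a', ((if a' = a then (1:ℝ) else 0) - q a') ^ 2
        = 1 - 2 * q a + ∑ a', q a' ^ 2 := by
      intro a
      have h1 : ∀ a' ∈ Finset.univ, ((if a' = a then (1:ℝ) else 0) - q a') ^ 2
          = (if a' = a then 1 - 2 * q a' else 0) + q a' ^ 2 := by
        intro a' _; split <;> ring
      rw [Finset.sum_congr rfl h1, Finset.sum_add_distrib, Finset.sum_ite_eq']
      simp
    show (∑ a, p a * ((1 / 2) * ∑ a', ((if a' = a then (1 : ℝ) else 0) - q a') ^ 2)) = _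
    rw [Finset.sum_congr rfl (fun a _ => by rw [inner a])]
    rw [Finset.sum_mul, ← Finset.sum_sub_distrib]
    apply Finset.sum_congr rfl
    intro a _; ring
  -- sum of squares of u
  have hSu : ∑ a', u a' ^ 2 = 1 / (n : ℝ) := by
    simp [u, Finset.sum_const, Finset.card_univ]
    field_simp
    ring
  -- B p u = val for p ∈ Δ
  have hBpu : ∀ p ∈ Δ, B p u = val := by
    intro p hp
    rw [hBform, hSu, hp.2]
    have : ∑ a, p a * u a = 1 / (n : ℝ) := by
      simp only [u, ← Finset.sum_mul, hp.2, one_mul]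
    rw [this]
    show (1:ℝ) * ((1/2) * (1 + 1/(n:ℝ))) - 1/(n:ℝ) = (1/2) * (1 - 1/(n:ℝ))
    ring
  -- B u q ≥ val for q ∈ Δ
  have hBuq : ∀ q ∈ Δ, val ≤ B u q := by
    intro q hq
    rw [hBform]
    have h1 : ∑ a, u a = 1 := hu.2
    have h2 : ∑ a, u a * q a = 1 / (n : ℝ) := by
      simp only [u, ← Finset.mul_sum, hq.2, mul_one]
    rw [h1, h2, one_mul]
    have h3 : 1 / (n : ℝ) ≤ ∑ a', q a' ^ 2 := sum_sq_ge_aux q hq.2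
    show (1/2) * (1 - 1/(n:ℝ)) ≤ (1/2) * (1 + ∑ a', q a' ^ 2) - 1/(n:ℝ)
    linarith
  -- B p q ≥ 0 for p ∈ Δ
  have hBnonneg : ∀ p ∈ Δ, ∀ q : A → ℝ, 0 ≤ B p q := by
    intro p hp q
    apply Finset.sum_nonneg
    intro a _
    apply mul_nonneg (hp.1 a)
    apply mul_nonneg (by norm_num)
    exact Finset.sum_nonneg (fun a' _ => sq_nonneg _)
  -- B p q ≤ (1/2)(1+S q) for p ∈ Δ, q ∈ Δ
  have hBle : ∀ p ∈ Δ, ∀ q ∈ Δ, B p q ≤ (1/2) * (1 + ∑ a', q a' ^ 2) := by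
    intro p hp q hq
    rw [hBform, hp.2, one_mul]
    have : 0 ≤ ∑ a, p a * q a :=
      Finset.sum_nonneg (fun a _ => mul_nonneg (hp.1 a) (hq.1 a))
    linarith
  -- Goal 3: sSup {B p u : p ∈ Δ} = val
  have goal3 : sSup {y : ℝ | ∃ p ∈ Δ, y = B p u} = val := by
    have : {y : ℝ | ∃ p ∈ Δ, y = B p u} = {val} := by
      ext y
      constructor
      · rintro ⟨p, hp, rfl⟩; exact hBpu p hp
      · rintro rfl; exact ⟨u, hu, (hBpu u hu).symm⟩
    rw [this, csSup_singleton]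
  -- memberships
  have mem3 : val ∈ {y : ℝ | ∃ p ∈ Δ, y = B p u} := ⟨u, hu, (hBpu u hu).symm⟩
  have memBu : ∀ q ∈ Δ, B u q ∈ {y : ℝ | ∃ q' ∈ Δ, y = B u q'} := by
    intro q hq; exact ⟨q, hq, rfl⟩
  -- Goal 4: sInf {B u q : q ∈ Δ} = val
  have goal4 : sInf {y : ℝ | ∃ q ∈ Δ, y = B u q} = val := by
    apply le_antisymm
    · apply csInf_le
      · exact ⟨val, fun y ⟨q, hq, hy⟩ => hy ▸ hBuq q hq⟩
      · have : B u u = val := hBpu u hu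
        exact this ▸ memBu u hu
    · apply le_csInf ⟨B u u, memBu u hu⟩
      rintro y ⟨q, hq, rfl⟩
      exact hBuq q hq
  have mem1 : val ∈ {x : ℝ | ∃ q ∈ Δ, x = sSup {y : ℝ | ∃ p ∈ Δ, y = B p q}} :=
    ⟨u, hu, goal3.symm⟩
  have mem2 : val ∈ {x : ℝ | ∃ p ∈ Δ, x = sInf {y : ℝ | ∃ q ∈ Δ, y = B p q}} :=
    ⟨u, hu, goal4.symm⟩
  have lb1 : ∀ x ∈ {x : ℝ | ∃ q ∈ Δ, x = sSup {y : ℝ | ∃ p ∈ Δ, y = B p q}},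
      val ≤ x := by
    rintro x ⟨q, hq, rfl⟩
    refine le_trans (hBuq q hq) ?_
    apply le_csSup
    · exact ⟨(1/2) * (1 + ∑ a', q a' ^ 2),
        fun y ⟨p, hp, hy⟩ => hy ▸ hBle p hp q hq⟩
    · exact ⟨u, hu, rfl⟩
  have ub2 : ∀ x ∈ {x : ℝ | ∃ p ∈ Δ, x = sInf {y : ℝ | ∃ q ∈ Δ, y = B p q}},
      x ≤ val := by
    rintro x ⟨p, hp, rfl⟩
    refine le_trans ?_ (le_of_eq (hBpu p hp))
    apply csInf_le
    · exact ⟨0, fun y ⟨q, hq, hy⟩ => hy ▸ hBnonneg p hp q⟩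
    · exact ⟨u, hu, rfl⟩
  refine ⟨?_, ?_, goal3, goal4⟩
  · exact le_antisymm (csInf_le ⟨val, lb1⟩ mem1) (le_csInf ⟨val, mem1⟩ lb1)
  · exact le_antisymm (csSup_le ⟨val, mem2⟩ ub2) (le_csSup ⟨val, ub2⟩ mem2)
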